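/- For positive integers r, n, k, the polynomial M_r(t;n,k) has the Taylor expansion M_r(t;n,k) = δ_{k^r|n} + Σ_{l=1}^{k} ((t−1)^l / l!) Σ_{m=1}^l s(l,m)·Q_r(n,k,m)/k^{rm}, where δ_{k^r|n} is 1 if k^r | n and 0 otherwise. -/

import Mathlib

open Finset

/-- Cohen's `r`-Ramanujan sum. -/
noncomputable def ramcr (r n k : ℕ) : ℂ :=
  ∑ m ∈ (Finset.Icc 1 (k ^ r)).filter
      (fun m => ∀ d ∈ Finset.Icc 2 (k ^ r), ¬(d ^ r ∣ m ∧ d ^ r ∣ k ^ r)),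
    Complex.exp (2 * Real.pi * Complex.I * m * n / (k ^ r))

/-- `M_r(t;n,k) = (1/k^r) Σ_{d|k} c_r(n,k/d) t^d`. -/
noncomputable def neckr (r : ℕ) (t : ℂ) (n k : ℕ) : ℂ :=
  (1 / (k : ℂ) ^ r) * ∑ d ∈ k.divisors, ramcr r n (k / d) * t ^ d

/-- Signed Stirling numbers of the first kind. -/
def stirS : ℕ → ℕ → ℤ
  | 0, 0 => 1
  | 0, _ + 1 => 0
  | l + 1, 0 => -(l : ℤ) * stirS l 0
  | l + 1, m + 1 => stirS l m - (l : ℤ) * stirS l (m + 1)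

lemma lcm_pow_dvd {a b c r : ℕ} (hr : r ≠ 0) (ha : a ^ r ∣ c) (hb : b ^ r ∣ c) :
    Nat.lcm a b ^ r ∣ c := by
  rcases eq_or_ne c 0 with rfl | hc
  · exact dvd_zero _
  have ha0 : a ≠ 0 := by rintro rfl; rw [zero_pow hr, zero_dvd_iff] at ha; exact hc ha
  have hb0 : b ≠ 0 := by rintro rfl; rw [zero_pow hr, zero_dvd_iff] at hb; exact hc hb
  have hl0 : Nat.lcm a b ≠ 0 := Nat.lcm_ne_zero ha0 hb0
  rw [← Nat.factorization_le_iff_dvd (pow_ne_zero _ hl0) hc]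
  rw [← Nat.factorization_le_iff_dvd (pow_ne_zero _ ha0) hc] at ha
  rw [← Nat.factorization_le_iff_dvd (pow_ne_zero _ hb0) hc] at hb
  rw [Nat.factorization_pow, Nat.factorization_lcm ha0 hb0] at *
  intro p
  have h1 := ha p
  have h2 := hb p
  simp only [Finsupp.smul_apply, Finsupp.sup_apply, smul_eq_mul] at *
  rcases le_total (a.factorization p) (b.factorization p) with h | h
  · rw [sup_of_le_right h]; exact h2
  · rw [sup_of_le_left h]; exact h1

lemma stirS_eq_zero_of_lt : ∀ l m : ℕ, l < m → stirS l m = 0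
  | 0, _ + 1, _ => rfl
  | l + 1, m + 1, h => by
    rw [stirS, stirS_eq_zero_of_lt l m (by omega), stirS_eq_zero_of_lt l (m+1) (by omega)]
    ring

lemma stir_sum (x : ℂ) : ∀ l, ∑ m ∈ range (l+1), (stirS l m : ℂ) * x ^ m = ∏ i ∈ range l, (x - i)
  | 0 => by simp [stirS]
  | l + 1 => by
    have ih := stir_sum x l
    rw [prod_range_succ, ← ih]
    rw [Finset.sum_range_succ' (fun m => (stirS (l+1) m : ℂ) * x ^ m) (l+1)]
    have key : ∑ m ∈ range (l+1), (stirS l (m+1) : ℂ) * x ^ (m+1) + (stirS l 0 : ℂ)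
        = ∑ m ∈ range (l+1), (stirS l m : ℂ) * x ^ m := by
      have h1 := Finset.sum_range_succ' (fun m => (stirS l m : ℂ) * x ^ m) (l+1)
      have h2 := Finset.sum_range_succ (fun m => (stirS l m : ℂ) * x ^ m) (l+1)
      rw [h2, stirS_eq_zero_of_lt l (l+1) (by omega)] at h1
      simpa using h1.symm
    have e1 : ∀ m : ℕ, ((stirS (l+1) (m+1) : ℤ) : ℂ) = (stirS l m : ℂ) - l * stirS l (m+1) := by
      intro m; rw [show stirS (l+1) (m+1) = stirS l m - (l:ℤ) * stirS l (m+1) from rfl]; push_cast; ring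
    have e0 : ((stirS (l+1) 0 : ℤ) : ℂ) = -(l:ℂ) * stirS l 0 := by
      rw [show stirS (l+1) 0 = -(l:ℤ) * stirS l 0 from rfl]; push_cast; ring
    simp only [e1, e0, sub_mul, Finset.sum_sub_distrib]
    have h3 : ∑ m ∈ range (l+1), (l:ℂ) * (stirS l (m+1):ℂ) * x^(m+1)
        = (l:ℂ) * ∑ m ∈ range (l+1), (stirS l (m+1):ℂ) * x^(m+1) := by
      rw [mul_sum]; exact sum_congr rfl fun m _ => by ring
    have h4 : ∑ m ∈ range (l+1), (stirS l m:ℂ) * x^(m+1)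
        = (∑ m ∈ range (l+1), (stirS l m:ℂ) * x^m) * x := by
      rw [sum_mul]; exact sum_congr rfl fun m _ => by ring
    rw [h3, h4]
    linear_combination (-(l:ℂ)) * key

lemma prod_cast_descFactorial (d l : ℕ) : ∏ i ∈ range l, ((d:ℂ) - i) = (d.descFactorial l : ℂ) := by
  induction l with
  | zero => simp
  | succ l ih =>
    rw [prod_range_succ, ih, Nat.descFactorial_succ]
    rcases lt_or_ge d l with h | h
    · rw [Nat.descFactorial_eq_zero_iff_lt.mpr h]; simp
    · push_cast [h]; ring

lemma expsum (N n : ℕ) (hN : 0 < N) :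
    ∑ j ∈ range N, Complex.exp (2 * Real.pi * Complex.I * j * n / N)
      = if N ∣ n then (N : ℂ) else 0 := by
  have hN0 : (N : ℂ) ≠ 0 := Nat.cast_ne_zero.mpr hN.ne'
  have h2pi : (2 * (Real.pi : ℂ) * Complex.I) ≠ 0 := by
    simp [Real.pi_ne_zero, Complex.I_ne_zero, Complex.ofReal_ne_zero]
  set ζ : ℂ := Complex.exp (2 * Real.pi * Complex.I * n / N) with hζ
  have hterm : ∀ j : ℕ, Complex.exp (2 * Real.pi * Complex.I * j * n / N) = ζ ^ j := by
    intro j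
    rw [hζ, ← Complex.exp_nat_mul]
    ring_nf
  have hζN : ζ ^ N = 1 := by
    rw [hζ, ← Complex.exp_nat_mul]
    rw [show (N : ℂ) * (2 * Real.pi * Complex.I * n / N) = n * (2 * Real.pi * Complex.I) by
      field_simp]
    exact Complex.exp_nat_mul_two_pi_mul_I n
  have hone : ζ = 1 ↔ (N : ℤ) ∣ (n : ℤ) := by
    rw [hζ, Complex.exp_eq_one_iff]
    constructor
    · rintro ⟨m, hm⟩
      have h1 : 2 * (Real.pi : ℂ) * Complex.I * n = 2 * (Real.pi : ℂ) * Complex.I * (m * N) := by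
        field_simp at hm
        linear_combination (2 * (Real.pi : ℂ) * Complex.I) * hm
      have h2 : (n : ℂ) = ((m * N : ℤ) : ℂ) := by
        push_cast
        exact mul_left_cancel₀ h2pi h1
      refine ⟨m, ?_⟩
      have : (n : ℤ) = m * N := by exact_mod_cast h2
      rw [this]; ring
    · rintro ⟨m, hm⟩
      refine ⟨m, ?_⟩
      have hmn : (n : ℂ) = m * N := by exact_mod_cast hm.trans (Int.mul_comm _ _)
      rw [hmn, mul_div_assoc, mul_div_cancel_right₀ _ hN0]
      ring
  simp only [hterm]
  by_cases h : N ∣ n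
  · have : ζ = 1 := hone.mpr (Int.natCast_dvd_natCast.mpr h)
    simp [this, h]
  · have hζ1 : ζ ≠ 1 := fun hc => h (Int.natCast_dvd_natCast.mp (hone.mp hc))
    rw [geom_sum_eq hζ1, hζN]
    simp [h]

lemma delta_sum (r n k : ℕ) (hr : 0 < r) (hk : 0 < k) :
    ∑ e ∈ k.divisors, ramcr r n e = if k ^ r ∣ n then ((k : ℂ) ^ r) else 0 := by
  classical
  have hk0 : k ≠ 0 := hk.ne'
  have hN : 0 < k ^ r := pow_pos hk r
  -- the "greatest common r-power divisor" selector
  set S : ℕ → Finset ℕ := fun j => k.divisors.filter (fun h => h ^ r ∣ j) with hS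
  have hSne : ∀ j, (S j).Nonempty := fun j =>
    ⟨1, mem_filter.mpr ⟨Nat.one_mem_divisors.mpr hk0, by simpa using one_dvd j⟩⟩
  set H : ℕ → ℕ := fun j => (S j).max' (hSne j) with hH
  have hHmem : ∀ j, H j ∈ S j := fun j => (S j).max'_mem (hSne j)
  have hHk : ∀ j, H j ∣ k := fun j => (Nat.mem_divisors.mp (mem_filter.mp (hHmem j)).1).1
  have hHj : ∀ j, H j ^ r ∣ j := fun j => (mem_filter.mp (hHmem j)).2
  have hH0 : ∀ j, 0 < H j := fun j => Nat.pos_of_mem_divisors (mem_filter.mp (hHmem j)).1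
  have hle : ∀ j h, h ∈ S j → h ≤ H j := fun j h hh => (S j).le_max' h hh
  -- rewrite the RHS as an exponential sum over Icc 1 (k^r)
  have hRHS : (if k ^ r ∣ n then ((k : ℂ) ^ r) else 0)
      = ∑ j ∈ Finset.Icc 1 (k ^ r), Complex.exp (2 * Real.pi * Complex.I * j * n / (k ^ r)) := by
    have hcast : ((k ^ r : ℕ) : ℂ) = (k : ℂ) ^ r := by push_cast; ring
    rw [← hcast, ← expsum (k ^ r) n hN]
    simp only [Nat.cast_pow]
    set f : ℕ → ℂ := fun j => Complex.exp (2 * Real.pi * Complex.I * j * n / ((k : ℂ) ^ r)) with hf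
    have hfN : f (k ^ r) = f 0 := by
      have hne : ((k : ℂ) ^ r) ≠ 0 := pow_ne_zero _ (Nat.cast_ne_zero.mpr hk0)
      simp only [hf, Nat.cast_zero]
      rw [show 2 * (Real.pi : ℂ) * Complex.I * (k ^ r : ℕ) * n / ((k : ℂ) ^ r)
          = (n : ℕ) * (2 * Real.pi * Complex.I) by push_cast; field_simp]
      rw [Complex.exp_nat_mul_two_pi_mul_I n]
      norm_num
    have h1 : Finset.Icc 1 (k ^ r) = Finset.Ico 1 (k ^ r + 1) := by
      rw [Finset.Ico_add_one_right_eq_Icc]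
    have h2 : ∑ j ∈ Finset.Ico 1 (k ^ r + 1), f j = ∑ j ∈ Finset.Ico 1 (k ^ r), f j + f (k ^ r) :=
      Finset.sum_Ico_succ_top (by omega) f
    have h3 : ∑ j ∈ Finset.Ico 0 (k ^ r), f j = f 0 + ∑ j ∈ Finset.Ico 1 (k ^ r), f j :=
      Finset.sum_eq_sum_Ico_succ_bot hN f
    rw [Finset.range_eq_Ico, h3, h1, h2, hfN]
    ring
  rw [hRHS]
  -- unfold ramcr and turn into a sigma sum
  simp only [ramcr]
  rw [Finset.sum_sigma']
  refine Finset.sum_nbij' (i := fun p => p.2 * (k / p.1) ^ r)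
    (j := fun q => ⟨k / H q, q / (H q) ^ r⟩) ?_ ?_ ?_ ?_ ?_
  · -- maps into Icc 1 (k^r)
    rintro ⟨e, m⟩ hp
    simp only [Finset.mem_sigma, mem_filter, Finset.mem_Icc, Nat.mem_divisors] at hp
    obtain ⟨⟨hek, -⟩, ⟨hm1, hm2⟩, -⟩ := hp
    have he0 : 0 < e := Nat.pos_of_dvd_of_pos hek hk
    have hg0 : 0 < k / e := Nat.div_pos (Nat.le_of_dvd hk hek) he0
    refine Finset.mem_Icc.mpr ⟨Nat.one_le_iff_ne_zero.mpr ?_, ?_⟩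
    · positivity
    · calc m * (k / e) ^ r ≤ e ^ r * (k / e) ^ r := Nat.mul_le_mul_right _ hm2
        _ = k ^ r := by rw [← mul_pow, Nat.mul_div_cancel' hek]
  · -- inverse maps into sigma
    intro j hj
    simp only [Finset.mem_Icc] at hj
    obtain ⟨hj1, hj2⟩ := hj
    have hj0 : j ≠ 0 := by omega
    set h := H j with hh
    have hhk : h ∣ k := hHk j
    have hhj : h ^ r ∣ j := hHj j
    have hh0 : 0 < h := hH0 j
    set e := k / h with he
    have hek : e ∣ k := Nat.div_dvd_of_dvd hhk
    have he0 : 0 < e := Nat.div_pos (Nat.le_of_dvd hk hhk) hh0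
    set m := j / h ^ r with hm
    simp only [Finset.mem_sigma, mem_filter, Finset.mem_Icc, Nat.mem_divisors]
    refine ⟨⟨hek, hk0⟩, ⟨⟨?_, ?_⟩, ?_⟩⟩
    · exact Nat.div_pos (Nat.le_of_dvd (by omega) hhj) (pow_pos hh0 r)
    · calc m ≤ k ^ r / h ^ r := Nat.div_le_div_right hj2
        _ = e ^ r := by rw [he, Nat.div_pow hhk]
    · -- the coprimality condition
      intro d hd hcon
      obtain ⟨hdm, hde⟩ := hcon
      have hde' : d ∣ e := (Nat.pow_dvd_pow_iff hr.ne').mp hde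
      have hd2 : 2 ≤ d := hd.1
      set p := d.minFac with hp
      have hpp : p.Prime := Nat.minFac_prime (by omega)
      have hpd : p ∣ d := Nat.minFac_dvd d
      have hmem : h * p ∈ S j := by
        refine mem_filter.mpr ⟨Nat.mem_divisors.mpr ⟨?_, hk0⟩, ?_⟩
        · calc h * p ∣ h * e := mul_dvd_mul_left h (hpd.trans hde')
            _ = k := Nat.mul_div_cancel' hhk
        · rw [mul_pow]
          calc h ^ r * p ^ r ∣ h ^ r * m :=
              mul_dvd_mul_left _ ((pow_dvd_pow_of_dvd hpd r).trans hdm)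
            _ = j := Nat.mul_div_cancel' hhj
      have := hle j (h * p) hmem
      have : h * 2 ≤ h * p := Nat.mul_le_mul_left h hpp.two_le
      omega
  · -- left inverse
    rintro ⟨e, m⟩ hp
    simp only [Finset.mem_sigma, mem_filter, Finset.mem_Icc, Nat.mem_divisors] at hp
    obtain ⟨⟨hek, -⟩, ⟨hm1, hm2⟩, hA⟩ := hp
    have he0 : 0 < e := Nat.pos_of_dvd_of_pos hek hk
    set g := k / e with hg
    have hgk : g ∣ k := Nat.div_dvd_of_dvd hek
    have hg0 : 0 < g := Nat.div_pos (Nat.le_of_dvd hk hek) he0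
    have hge : g * e = k := Nat.div_mul_cancel hek
    set j := m * g ^ r with hj
    -- claim : H j = g
    have hgS : g ∈ S j := mem_filter.mpr ⟨Nat.mem_divisors.mpr ⟨hgk, hk0⟩, dvd_mul_left _ m⟩
    have hmax : ∀ h' ∈ S j, h' ≤ g := by
      intro h' hh'
      obtain ⟨hh'd, hh'j⟩ := mem_filter.mp hh'
      have hh'k : h' ∣ k := (Nat.mem_divisors.mp hh'd).1
      have hh'0 : 0 < h' := Nat.pos_of_mem_divisors hh'd
      set L := Nat.lcm h' g with hL
      have hLk : L ∣ k := Nat.lcm_dvd hh'k hgk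
      have hLj : L ^ r ∣ j := lcm_pow_dvd hr.ne' hh'j (dvd_mul_left _ m)
      have hgL : g ∣ L := Nat.dvd_lcm_right h' g
      have hL0 : 0 < L := Nat.pos_of_ne_zero (Nat.lcm_ne_zero hh'0.ne' hg0.ne')
      by_cases hLg : L = g
      · exact Nat.le_of_dvd hg0 (hLg ▸ Nat.dvd_lcm_left h' g)
      · exfalso
        have hq2 : 2 ≤ L / g := by
          have h1 : L / g ≠ 1 := fun hone => hLg (by
            rw [← Nat.div_mul_cancel hgL, hone, one_mul])
          have h0 : 0 < L / g := Nat.div_pos (Nat.le_of_dvd hL0 hgL) hg0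
          omega
        set p := (L / g).minFac with hp
        have hpp : p.Prime := Nat.minFac_prime (by omega)
        have hpLg : p ∣ L / g := Nat.minFac_dvd _
        have hgpL : g * p ∣ L :=
          (mul_dvd_mul_left g hpLg).trans (by rw [Nat.mul_div_cancel' hgL])
        have h5 : g ^ r * p ^ r ∣ g ^ r * m := by
          have h6 : (g * p) ^ r ∣ m * g ^ r := (pow_dvd_pow_of_dvd hgpL r).trans hLj
          rw [mul_pow] at h6
          rwa [mul_comm m (g ^ r)] at h6
        have hpm : p ^ r ∣ m := (mul_dvd_mul_iff_left (pow_ne_zero r hg0.ne')).mp h5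
        have hLge : L / g ∣ e := by
          obtain ⟨c, hc⟩ := hgL
          obtain ⟨d, hd⟩ := hLk
          have hLgc : L / g = c := by rw [hc, Nat.mul_div_cancel_left _ hg0]
          have hec : e = c * d := by
            have hkg : g * e = g * (c * d) := by rw [hge, hd, hc]; ring
            exact Nat.eq_of_mul_eq_mul_left hg0 hkg
          rw [hLgc, hec]
          exact dvd_mul_right c d
        have hpe : p ∣ e := hpLg.trans hLge
        refine hA p ⟨hpp.two_le, ?_⟩ ⟨hpm, pow_dvd_pow_of_dvd hpe r⟩
        exact (Nat.le_of_dvd he0 hpe).trans (Nat.le_self_pow hr.ne' e)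
    have hHg : H j = g := le_antisymm (Finset.max'_le _ _ _ hmax) (hle j g hgS)
    have h1 : k / H j = e := by rw [hHg, hg, Nat.div_div_self hek hk0]
    have h2 : j / H j ^ r = m := by rw [hHg, hj, Nat.mul_div_cancel m (pow_pos hg0 r)]
    exact Sigma.ext h1 (heq_of_eq h2)
  · -- right inverse
    intro j hj
    simp only
    rw [Nat.div_div_self (hHk j) hk0, Nat.div_mul_cancel (hHj j)]
  · -- values agree
    rintro ⟨e, m⟩ hp
    simp only [Finset.mem_sigma, mem_filter, Finset.mem_Icc, Nat.mem_divisors] at hp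
    obtain ⟨⟨hek, -⟩, ⟨hm1, hm2⟩, -⟩ := hp
    have he0 : 0 < e := Nat.pos_of_dvd_of_pos hek hk
    have hkey : ((k / e : ℕ) : ℂ) ^ r * (e : ℂ) ^ r = (k : ℂ) ^ r := by
      rw [← mul_pow]
      congr 1
      exact_mod_cast congrArg (Nat.cast (R := ℂ)) (Nat.div_mul_cancel hek)
    have hene : ((e : ℂ)) ^ r ≠ 0 := pow_ne_zero _ (Nat.cast_ne_zero.mpr he0.ne')
    have hkne : ((k : ℂ)) ^ r ≠ 0 := pow_ne_zero _ (Nat.cast_ne_zero.mpr hk0)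
    congr 1
    push_cast
    rw [div_eq_div_iff hene hkne]
    rw [← hkey]
    ring

lemma stirS_succ_zero : ∀ l : ℕ, stirS (l + 1) 0 = 0
  | 0 => by simp [stirS]
  | l + 1 => by
    rw [show stirS (l + 2) 0 = -(l + 1 : ℤ) * stirS (l + 1) 0 from rfl, stirS_succ_zero l]
    ring


theorem stmt12 (r n k : ℕ) (hr : 0 < r) (hn : 0 < n) (hk : 0 < k) (t : ℂ) :
    neckr r t n k
      = (if k ^ r ∣ n then 1 else 0)
        + ∑ l ∈ Finset.Icc 1 k, (t - 1) ^ l / (Nat.factorial l : ℂ) *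
            ∑ m ∈ Finset.Icc 1 l, (stirS l m : ℂ) *
              ((1 / (k : ℂ) ^ r) * ∑ d ∈ k.divisors, ramcr r n (k / d) * (d : ℂ) ^ m) := by
  have hk0 : k ≠ 0 := hk.ne'
  have hkc : ((k : ℂ)) ^ r ≠ 0 := pow_ne_zero _ (Nat.cast_ne_zero.mpr hk0)
  rw [neckr]
  have hstep1 : ∀ d ∈ k.divisors, ramcr r n (k / d) * t ^ d
      = ∑ l ∈ range (k + 1), ramcr r n (k / d) * ((t - 1) ^ l * (d.choose l : ℂ)) := by
    intro d hd
    have hdk : d ≤ k := Nat.le_of_dvd hk (Nat.mem_divisors.mp hd).1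
    have ht : t ^ d = ∑ l ∈ range (d + 1), (t - 1) ^ l * (d.choose l : ℂ) := by
      conv_lhs => rw [show t = (t - 1) + 1 by ring]
      rw [add_pow]
      exact Finset.sum_congr rfl fun l _ => by rw [one_pow]; ring
    rw [ht, Finset.mul_sum]
    apply Finset.sum_subset (by intro x hx; simp only [Finset.mem_range] at hx ⊢; omega)
    intro x hx1 hx2
    simp only [Finset.mem_range] at hx1 hx2
    rw [Nat.choose_eq_zero_of_lt (by omega)]
    simp
  rw [Finset.sum_congr rfl hstep1, Finset.sum_comm]
  rw [Finset.range_eq_Ico, Finset.sum_eq_sum_Ico_succ_bot (by omega), Finset.Ico_add_one_right_eq_Icc]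
  rw [mul_add]
  congr 1
  · -- the delta term
    have h1 : ∀ d ∈ k.divisors, ramcr r n (k / d) * ((t - 1) ^ 0 * ((d.choose 0 : ℕ) : ℂ))
        = ramcr r n (k / d) := by
      intro d _
      simp
    rw [Finset.sum_congr rfl h1, Nat.sum_div_divisors k (ramcr r n), delta_sum r n k hr hk]
    split_ifs
    · field_simp
    · ring
  · -- the main terms
    rw [Finset.mul_sum]
    refine Finset.sum_congr rfl fun l hl => ?_
    obtain ⟨hl1, hl2⟩ := Finset.mem_Icc.mp hl
    have hstir : ∀ d : ℕ, ∑ m ∈ Finset.Icc 1 l, (stirS l m : ℂ) * (d : ℂ) ^ m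
        = (Nat.descFactorial d l : ℂ) := by
      intro d
      have h0 : ∑ m ∈ range (l + 1), (stirS l m : ℂ) * (d : ℂ) ^ m
          = (stirS l 0 : ℂ) * (d : ℂ) ^ 0 + ∑ m ∈ Finset.Icc 1 l, (stirS l m : ℂ) * (d : ℂ) ^ m := by
        rw [Finset.range_eq_Ico, Finset.sum_eq_sum_Ico_succ_bot (by omega), Finset.Ico_add_one_right_eq_Icc]
      have hz : stirS l 0 = 0 := by
        obtain ⟨l', rfl⟩ : ∃ l', l = l' + 1 := ⟨l - 1, by omega⟩
        exact stirS_succ_zero l'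
      rw [← prod_cast_descFactorial, ← stir_sum (d : ℂ) l, h0, hz]
      simp
    have hswap : ∑ m ∈ Finset.Icc 1 l, (stirS l m : ℂ) *
          ((1 / (k : ℂ) ^ r) * ∑ d ∈ k.divisors, ramcr r n (k / d) * (d : ℂ) ^ m)
        = (1 / (k : ℂ) ^ r) * ∑ d ∈ k.divisors, ramcr r n (k / d) *
            ∑ m ∈ Finset.Icc 1 l, (stirS l m : ℂ) * (d : ℂ) ^ m := by
      calc ∑ m ∈ Finset.Icc 1 l, (stirS l m : ℂ) *
              ((1 / (k : ℂ) ^ r) * ∑ d ∈ k.divisors, ramcr r n (k / d) * (d : ℂ) ^ m)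
          = ∑ m ∈ Finset.Icc 1 l, ∑ d ∈ k.divisors,
              (1 / (k : ℂ) ^ r) * ((stirS l m : ℂ) * (ramcr r n (k / d) * (d : ℂ) ^ m)) := by
            simp only [Finset.mul_sum]
            exact Finset.sum_congr rfl fun m _ => Finset.sum_congr rfl fun d _ => by ring
        _ = ∑ d ∈ k.divisors, ∑ m ∈ Finset.Icc 1 l,
              (1 / (k : ℂ) ^ r) * ((stirS l m : ℂ) * (ramcr r n (k / d) * (d : ℂ) ^ m)) :=
            Finset.sum_comm
        _ = _ := by
            simp only [Finset.mul_sum]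
            exact Finset.sum_congr rfl fun d _ => Finset.sum_congr rfl fun m _ => by ring
    rw [hswap]
    have hl0 : (Nat.factorial l : ℂ) ≠ 0 := Nat.cast_ne_zero.mpr (Nat.factorial_ne_zero l)
    simp only [Finset.mul_sum]
    refine Finset.sum_congr rfl fun d _ => ?_
    rw [show ∑ i ∈ Finset.Icc 1 l, (t - 1) ^ l / (Nat.factorial l : ℂ) *
          (1 / (k : ℂ) ^ r * (ramcr r n (k / d) * ((stirS l i : ℂ) * (d : ℂ) ^ i)))
        = (t - 1) ^ l / (Nat.factorial l : ℂ) *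
          (1 / (k : ℂ) ^ r * (ramcr r n (k / d) * ∑ i ∈ Finset.Icc 1 l, (stirS l i : ℂ) * (d : ℂ) ^ i))
      by simp only [Finset.mul_sum]]
    rw [hstir d, Nat.descFactorial_eq_factorial_mul_choose]
    push_cast
    field_simp
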